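/- Let y ∈ ℂ⟦t⟧ be a formal power series, let S = {n ∈ ℕ : coeff n of y ≠ 0} be its support, and let d ≥ 2 be a natural number with gcd(d, gcd of S) = 1. Then: (i) for every ζ ∈ ℂ with ζ^d = 1 and ζ ≠ 1, we have rescale ζ y ≠ y, so the order of rescale ζ y − y is a (finite) natural number; and (ii) a natural number β equals the order of rescale ζ y − y for some ζ ∈ ℂ with ζ^d = 1 and ζ ≠ 1 if and only if β is a characteristic exponent of (S, d). -/

import Mathlib

/-- The gcd of a set of natural numbers: the greatest common divisor of all its elements,
with the convention that the gcd of a set of which every element is `0` (e.g. the empty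
set) is `0`. -/
noncomputable def setGcd (S : Set ℕ) : ℕ :=
  sSup {g : ℕ | ∀ n ∈ S, g ∣ n}

/-- `β` is a characteristic exponent of `(S, d)` if `β ∈ S` and
`gcd(d, gcd {n ∈ S | n < β})` does not divide `β` (where the gcd of the empty set is `0`,
so that `gcd (d, 0) = d`). -/
def IsCharExponent (S : Set ℕ) (d β : ℕ) : Prop :=
  β ∈ S ∧ ¬ Nat.gcd d (setGcd {n ∈ S | n < β}) ∣ β

lemma setGcd_dvd {S : Set ℕ} {n : ℕ} (hn : n ∈ S) : setGcd S ∣ n := by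
  by_cases hz : ∀ m ∈ S, m = 0
  · have : {g : ℕ | ∀ n ∈ S, g ∣ n} = Set.univ := by
      ext g; simp only [Set.mem_setOf_eq, Set.mem_univ, iff_true]
      intro m hm; rw [hz m hm]; exact dvd_zero g
    rw [setGcd, this]
    rw [hz n hn]
    exact dvd_zero _
  · push_neg at hz
    obtain ⟨m, hm, hm0⟩ := hz
    have hbdd : BddAbove {g : ℕ | ∀ n ∈ S, g ∣ n} :=
      ⟨m, fun g hg => Nat.le_of_dvd (Nat.pos_of_ne_zero hm0) (hg m hm)⟩
    have hne : {g : ℕ | ∀ n ∈ S, g ∣ n}.Nonempty := ⟨1, fun n _ => one_dvd n⟩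
    exact Nat.sSup_mem hne hbdd n hn

lemma dvd_setGcd {S : Set ℕ} {g : ℕ} (h : ∀ n ∈ S, g ∣ n) : g ∣ setGcd S := by
  by_cases hz : ∀ m ∈ S, m = 0
  · have : {g : ℕ | ∀ n ∈ S, g ∣ n} = Set.univ := by
      ext g; simp only [Set.mem_setOf_eq, Set.mem_univ, iff_true]
      intro m hm; rw [hz m hm]; exact dvd_zero g
    rw [setGcd, this, Set.Infinite.Nat.sSup_eq_zero Set.infinite_univ]
    exact dvd_zero g
  · push_neg at hz
    obtain ⟨m, hm, hm0⟩ := hz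
    have hbdd : BddAbove {g' : ℕ | ∀ n ∈ S, g' ∣ n} :=
      ⟨m, fun g' hg' => Nat.le_of_dvd (Nat.pos_of_ne_zero hm0) (hg' m hm)⟩
    have hne : {g' : ℕ | ∀ n ∈ S, g' ∣ n}.Nonempty := ⟨1, fun n _ => one_dvd n⟩
    have hmem : setGcd S ∈ {g' : ℕ | ∀ n ∈ S, g' ∣ n} := Nat.sSup_mem hne hbdd
    -- lcm of g and setGcd S is also a common divisor
    have hlcm : Nat.lcm g (setGcd S) ∈ {g' : ℕ | ∀ n ∈ S, g' ∣ n} :=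
      fun n hn => Nat.lcm_dvd (h n hn) (hmem n hn)
    have hle : Nat.lcm g (setGcd S) ≤ setGcd S := le_csSup hbdd hlcm
    have hg0 : g ≠ 0 := fun h0 => hm0 (by simpa [h0] using h m hm)
    have hs0 : setGcd S ≠ 0 := fun h0 => hm0 (by simpa [h0] using hmem m hm)
    have hge : setGcd S ≤ Nat.lcm g (setGcd S) :=
      Nat.le_of_dvd (Nat.pos_of_ne_zero (Nat.lcm_ne_zero hg0 hs0)) (Nat.dvd_lcm_right _ _)
    have : Nat.lcm g (setGcd S) = setGcd S := le_antisymm hle hge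
    calc g ∣ Nat.lcm g (setGcd S) := Nat.dvd_lcm_left _ _
      _ = setGcd S := this

/-- Let `y ∈ ℂ⟦t⟧` with support `S`, and let `d ≥ 2` with `gcd (d, gcd S) = 1`.  Then for
every `d`-th root of unity `ζ ≠ 1` we have `y(ζt) ≠ y`, and the natural numbers arising
as the order of `y(ζt) - y` for some `d`-th root of unity `ζ ≠ 1` are exactly the
characteristic exponents of `(S, d)`. -/
theorem order_rescale_sub_self_eq_charExponents (y : PowerSeries ℂ) (d : ℕ) (hd : 2 ≤ d)
    (hgcd : Nat.gcd d (setGcd {n : ℕ | PowerSeries.coeff n y ≠ 0}) = 1) :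
    (∀ ζ : ℂ, ζ ^ d = 1 → ζ ≠ 1 → PowerSeries.rescale ζ y ≠ y) ∧
    (∀ β : ℕ,
      (∃ ζ : ℂ, ζ ^ d = 1 ∧ ζ ≠ 1 ∧ (PowerSeries.rescale ζ y - y).order = (β : ℕ∞)) ↔
        IsCharExponent {n : ℕ | PowerSeries.coeff n y ≠ 0} d β) := by
  set S := {n : ℕ | PowerSeries.coeff n y ≠ 0} with hS
  have coeff_diff : ∀ (ζ : ℂ) (n : ℕ),
      PowerSeries.coeff n (PowerSeries.rescale ζ y - y) =
        (ζ ^ n - 1) * PowerSeries.coeff n y := by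
    intro ζ n
    rw [map_sub, PowerSeries.coeff_rescale, sub_mul, one_mul]
  constructor
  · intro ζ hζd hζ1 heq
    set o := orderOf ζ with ho
    have hoS : ∀ n ∈ S, o ∣ n := by
      intro n hn
      rw [orderOf_dvd_iff_pow_eq_one]
      have : (ζ ^ n - 1) * PowerSeries.coeff n y = 0 := by
        rw [← coeff_diff, heq, sub_self, map_zero]
      rcases mul_eq_zero.1 this with h | h
      · exact sub_eq_zero.1 h
      · exact absurd h hn
    have hod : o ∣ d := orderOf_dvd_iff_pow_eq_one.2 hζd
    have : o ∣ Nat.gcd d (setGcd S) := Nat.dvd_gcd hod (dvd_setGcd hoS)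
    rw [hgcd, Nat.dvd_one] at this
    exact hζ1 (orderOf_eq_one_iff.1 this)
  · intro β
    constructor
    · rintro ⟨ζ, hζd, hζ1, hord⟩
      rw [PowerSeries.order_eq_nat] at hord
      obtain ⟨hβ, hlt⟩ := hord
      rw [coeff_diff] at hβ
      have hβS : β ∈ S := fun h => hβ (by rw [h, mul_zero])
      have hζβ : ζ ^ β ≠ 1 := fun h => hβ (by rw [h, sub_self, zero_mul])
      refine ⟨hβS, fun hdvd => ?_⟩
      set o := orderOf ζ with ho
      have hoT : ∀ n ∈ {n ∈ S | n < β}, o ∣ n := by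
        rintro n ⟨hnS, hnβ⟩
        rw [orderOf_dvd_iff_pow_eq_one]
        have := hlt n hnβ
        rw [coeff_diff] at this
        rcases mul_eq_zero.1 this with h | h
        · exact sub_eq_zero.1 h
        · exact absurd h hnS
      have hod : o ∣ d := orderOf_dvd_iff_pow_eq_one.2 hζd
      have hog : o ∣ Nat.gcd d (setGcd {n ∈ S | n < β}) :=
        Nat.dvd_gcd hod (dvd_setGcd hoT)
      exact hζβ (orderOf_dvd_iff_pow_eq_one.1 (hog.trans hdvd))
    · rintro ⟨hβS, hndvd⟩
      set g := Nat.gcd d (setGcd {n ∈ S | n < β}) with hg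
      have hg0 : g ≠ 0 := by
        intro h0
        have := Nat.eq_zero_of_gcd_eq_zero_left h0
        omega
      have hprim : IsPrimitiveRoot (Complex.exp (2 * Real.pi * Complex.I / g)) g :=
        Complex.isPrimitiveRoot_exp g hg0
      set ζ := Complex.exp (2 * Real.pi * Complex.I / g) with hζ
      have hpow : ∀ m : ℕ, ζ ^ m = 1 ↔ g ∣ m := fun m => hprim.pow_eq_one_iff_dvd m
      refine ⟨ζ, (hpow d).2 (Nat.gcd_dvd_left _ _), ?_, ?_⟩
      · intro h1
        have : g ∣ 1 := (hpow 1).1 (by rw [pow_one]; exact h1)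
        exact hndvd ((Nat.dvd_one.1 this) ▸ one_dvd β)
      · rw [PowerSeries.order_eq_nat]
        constructor
        · rw [coeff_diff]
          exact mul_ne_zero (sub_ne_zero.2 fun h => hndvd ((hpow β).1 h)) hβS
        · intro i hi
          rw [coeff_diff]
          by_cases hiS : i ∈ S
          · have : g ∣ i :=
              (Nat.gcd_dvd_right d _).trans (setGcd_dvd ⟨hiS, hi⟩)
            rw [(hpow i).2 this, sub_self, zero_mul]
          · rw [hS] at hiS
            simp only [Set.mem_setOf_eq, not_not] at hiS
            rw [hiS, mul_zero]
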